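/- For a positive integer N, let P(N) denote the largest integer of the form ∏_{p prime, p ≤ k} p (over integers k ≥ 0, with the empty product equal to 1) that is at most N. Then for every positive integer x with x ≤ N, one has φ(x)/x ≥ φ(P(N))/P(N), where φ is Euler's totient function; that is, among all positive integers up to N, the ratio φ(x)/x is minimised at the largest primorial not exceeding N. -/

import Mathlib

open Finset Nat

private lemma aux_ratio (n : ℕ) (hn : 0 < n) :
    (n.totient : ℝ) / n = ∏ p ∈ n.primeFactors, (1 - 1 / (p : ℝ)) := by
  have h := Nat.totient_mul_prod_primeFactors n
  have hpos : ∀ p ∈ n.primeFactors, (0 : ℝ) < p := fun p hp => by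
    exact_mod_cast (Nat.prime_of_mem_primeFactors hp).pos
  have hprodpos : (0 : ℝ) < ∏ p ∈ n.primeFactors, (p : ℝ) :=
    Finset.prod_pos hpos
  have hc : (n.totient : ℝ) * ∏ p ∈ n.primeFactors, (p : ℝ)
      = (n : ℝ) * ∏ p ∈ n.primeFactors, ((p : ℝ) - 1) := by
    have := congrArg (fun m : ℕ => (m : ℝ)) h
    simp only [Nat.cast_mul, Nat.cast_prod] at this
    rw [this]
    congr 1
    refine Finset.prod_congr rfl fun p hp => ?_
    have h1 : 1 ≤ p := (Nat.prime_of_mem_primeFactors hp).one_lt.le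
    push_cast [Nat.cast_sub h1]
    ring
  have heq : ∏ p ∈ n.primeFactors, (1 - 1 / (p : ℝ))
      = (∏ p ∈ n.primeFactors, ((p : ℝ) - 1)) / ∏ p ∈ n.primeFactors, (p : ℝ) := by
    rw [← Finset.prod_div_distrib]
    refine Finset.prod_congr rfl fun p hp => ?_
    have := (hpos p hp).ne'
    field_simp
  rw [heq, div_eq_div_iff (by exact_mod_cast hn.ne' : (n:ℝ) ≠ 0) hprodpos.ne']
  linarith [hc]

private lemma aux_pairing (f : ℕ → ℝ)
    (hmono : ∀ p q : ℕ, p.Prime → q.Prime → p ≤ q → f p ≤ f q)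
    (hpos : ∀ p : ℕ, p.Prime → 0 ≤ f p) :
    ∀ (n : ℕ) (S : Finset ℕ), S.card = n → (∀ p ∈ S, p.Prime) →
      ∏ i ∈ Finset.range n, f (Nat.nth Nat.Prime i) ≤ ∏ p ∈ S, f p := by
  intro n
  induction n with
  | zero => intro S hcard _; simp [Finset.card_eq_zero.mp hcard]
  | succ n ih =>
    intro S hcard hS
    have hne : S.Nonempty := Finset.card_pos.mp (by omega)
    set q := S.max' hne with hqdef
    have hq : q ∈ S := S.max'_mem hne
    have hqp : q.Prime := hS q hq
    have hsub : S ⊆ Finset.filter Nat.Prime (Finset.range (q + 1)) := by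
      intro p hp
      simp only [Finset.mem_filter, Finset.mem_range, Nat.lt_succ_iff]
      exact ⟨S.le_max' p hp, hS p hp⟩
    have hcount : n + 1 ≤ Nat.count Nat.Prime (q + 1) := by
      rw [Nat.count_eq_card_filter_range, ← hcard]
      exact Finset.card_le_card hsub
    have hcq : n ≤ Nat.count Nat.Prime q := by
      rw [Nat.count_succ, if_pos hqp] at hcount; omega
    have hnq : Nat.nth Nat.Prime n ≤ q := by
      calc Nat.nth Nat.Prime n ≤ Nat.nth Nat.Prime (Nat.count Nat.Prime q) :=
            (Nat.nth_le_nth Nat.infinite_setOf_prime).mpr hcq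
        _ = q := Nat.nth_count hqp
    have hrec := ih (S.erase q) (by rw [Finset.card_erase_of_mem hq, hcard]; omega) fun p hp =>
      hS p (Finset.mem_of_mem_erase hp)
    rw [Finset.prod_range_succ, ← Finset.mul_prod_erase S f hq]
    have h1 : 0 ≤ ∏ i ∈ Finset.range n, f (Nat.nth Nat.Prime i) :=
      Finset.prod_nonneg fun i _ => hpos _ (Nat.prime_nth_prime i)
    have h2 := hmono _ _ (Nat.prime_nth_prime n) hqp hnq
    have h3 : 0 ≤ f (Nat.nth Nat.Prime n) := hpos _ (Nat.prime_nth_prime n)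
    have h4 : 0 ≤ ∏ p ∈ S.erase q, f p :=
      Finset.prod_nonneg fun p hp => hpos p (hS p (Finset.mem_of_mem_erase hp))
    rw [mul_comm (f q)]
    exact mul_le_mul hrec h2 h3 h4

theorem stmt16 (N : ℕ) (hN : 0 < N) (P : ℕ)
    (hprim : ∃ k : ℕ, P = primorial k) (hle : P ≤ N)
    (hmax : ∀ P' : ℕ, (∃ k : ℕ, P' = primorial k) → P' ≤ N → P' ≤ P)
    (x : ℕ) (hx0 : 0 < x) (hxN : x ≤ N) :
    (P.totient : ℝ) / (P : ℝ) ≤ (x.totient : ℝ) / (x : ℝ) := by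
  obtain ⟨k, hk⟩ := hprim
  have hP0 : 0 < P := hk ▸ primorial_pos k
  set A : Finset ℕ := Finset.filter Nat.Prime (Finset.range (k + 1)) with hA
  have hPA : P = ∏ p ∈ A, p := hk
  have hPfac : P.primeFactors = A := by
    rw [hPA]
    exact Nat.primeFactors_prod fun p hp => (Finset.mem_filter.mp hp).2
  set m := x.primeFactors.card with hm
  have hxprimes : ∀ p ∈ x.primeFactors, p.Prime := fun p hp =>
    Nat.prime_of_mem_primeFactors hp
  -- product of the first m primes is at most x
  have hcastle : ∏ i ∈ Finset.range m, ((Nat.nth Nat.Prime i : ℕ) : ℝ)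
      ≤ ∏ p ∈ x.primeFactors, ((p : ℕ) : ℝ) :=
    aux_pairing (fun p => (p : ℝ))
      (fun p q _ _ h => by exact_mod_cast h)
      (fun p hp => by positivity) m x.primeFactors rfl hxprimes
  have hnatle : ∏ i ∈ Finset.range m, Nat.nth Nat.Prime i ≤ x := by
    have h2 : ∏ p ∈ x.primeFactors, p ≤ x :=
      Nat.le_of_dvd hx0 (Nat.prod_primeFactors_dvd x)
    have h1 : ∏ i ∈ Finset.range m, Nat.nth Nat.Prime i
        ≤ ∏ p ∈ x.primeFactors, p := by
      rw [← Nat.cast_le (α := ℝ)]; push_cast; exact_mod_cast hcastle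
    omega
  -- each of the first m primes is in A
  have hmem : ∀ i < m, Nat.nth Nat.Prime i ∈ A := by
    intro i hi
    have hm1 : 1 ≤ m := by omega
    -- the filter below p_{m-1} is exactly the first m primes
    have hset : Finset.filter Nat.Prime (Finset.range (Nat.nth Nat.Prime (m - 1) + 1))
        = Finset.image (Nat.nth Nat.Prime) (Finset.range m) := by
      ext p
      simp only [Finset.mem_filter, Finset.mem_range, Finset.mem_image, Nat.lt_succ_iff]
      constructor
      · rintro ⟨hple, hpp⟩
        refine ⟨Nat.count Nat.Prime p, ?_, Nat.nth_count hpp⟩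
        have : Nat.count Nat.Prime p ≤ Nat.count Nat.Prime (Nat.nth Nat.Prime (m - 1)) :=
          Nat.count_monotone _ hple
        rw [Nat.count_nth_of_infinite Nat.infinite_setOf_prime] at this
        omega
      · rintro ⟨j, hj, rfl⟩
        exact ⟨(Nat.nth_le_nth Nat.infinite_setOf_prime).mpr (by omega),
          Nat.prime_nth_prime j⟩
    have hprimm : primorial (Nat.nth Nat.Prime (m - 1))
        = ∏ j ∈ Finset.range m, Nat.nth Nat.Prime j := by
      show ∏ p ∈ Finset.filter Nat.Prime (Finset.range (Nat.nth Nat.Prime (m - 1) + 1)), p = _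
      rw [hset, Finset.prod_image fun a _ b _ h =>
        Nat.nth_injective Nat.infinite_setOf_prime h]
    have hpmN : primorial (Nat.nth Nat.Prime (m - 1)) ≤ N := by
      rw [hprimm]; omega
    have hpmP : primorial (Nat.nth Nat.Prime (m - 1)) ≤ P :=
      hmax _ ⟨_, rfl⟩ hpmN
    -- now show nth Prime i ≤ k
    by_contra hcon
    simp only [hA, Finset.mem_filter, Finset.mem_range, Nat.lt_succ_iff,
      Nat.prime_nth_prime, and_true] at hcon
    push_neg at hcon
    set p := Nat.nth Nat.Prime i with hp
    have hpk : k < p := hcon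
    have hpA : p ∉ A := by
      simp [hA, Finset.mem_filter, Finset.mem_range, Nat.lt_succ_iff]
      intro h; omega
    have hple : p ≤ Nat.nth Nat.Prime (m - 1) :=
      (Nat.nth_le_nth Nat.infinite_setOf_prime).mpr (by omega)
    have hsub2 : insert p A ⊆ Finset.filter Nat.Prime
        (Finset.range (Nat.nth Nat.Prime (m - 1) + 1)) := by
      intro q hq
      rcases Finset.mem_insert.mp hq with rfl | hq
      · simp only [Finset.mem_filter, Finset.mem_range, Nat.lt_succ_iff]
        exact ⟨hple, Nat.prime_nth_prime i⟩
      · simp only [hA, Finset.mem_filter, Finset.mem_range, Nat.lt_succ_iff] at hq ⊢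
        exact ⟨le_trans (le_trans hq.1 (le_of_lt hpk)) hple, hq.2⟩
    have hlt : P * p ≤ primorial (Nat.nth Nat.Prime (m - 1)) := by
      have : ∏ q ∈ insert p A, q ≤ ∏ q ∈ Finset.filter Nat.Prime
          (Finset.range (Nat.nth Nat.Prime (m - 1) + 1)), q :=
        Finset.prod_le_prod_of_subset_of_one_le' hsub2 fun q hq _ =>
          ((Finset.mem_filter.mp hq).2).one_lt.le
      rw [Finset.prod_insert hpA, ← hPA] at this
      calc P * p = p * P := mul_comm _ _
        _ ≤ _ := this
    have hp2 : 2 ≤ p := (Nat.prime_nth_prime i).two_le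
    nlinarith [hpmP, hP0]
  -- real-valued chain
  rw [aux_ratio P hP0, aux_ratio x hx0, hPfac]
  have hfac01 : ∀ p : ℕ, p.Prime → 0 ≤ 1 - 1 / (p : ℝ) ∧ 1 - 1 / (p : ℝ) ≤ 1 := by
    intro p hp
    have h1 : (1 : ℝ) ≤ p := by exact_mod_cast hp.one_lt.le
    constructor
    · have : 1 / (p : ℝ) ≤ 1 := by
        rw [div_le_one (by linarith)]; exact h1
      linarith
    · have : 0 ≤ 1 / (p : ℝ) := by positivity
      linarith
  set F : Finset ℕ := Finset.image (Nat.nth Nat.Prime) (Finset.range m) with hF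
  have hFA : F ⊆ A := by
    intro p hp
    obtain ⟨i, hi, rfl⟩ := Finset.mem_image.mp hp
    exact hmem i (Finset.mem_range.mp hi)
  have step1 : ∏ p ∈ A, (1 - 1 / (p : ℝ)) ≤ ∏ p ∈ F, (1 - 1 / (p : ℝ)) := by
    rw [← Finset.prod_sdiff hFA]
    have hle1 : ∏ p ∈ A \ F, (1 - 1 / (p : ℝ)) ≤ 1 :=
      Finset.prod_le_one
        (fun p hp => (hfac01 p (Finset.mem_filter.mp (Finset.mem_sdiff.mp hp).1).2).1)
        (fun p hp => (hfac01 p (Finset.mem_filter.mp (Finset.mem_sdiff.mp hp).1).2).2)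
    have hge0 : 0 ≤ ∏ p ∈ F, (1 - 1 / (p : ℝ)) :=
      Finset.prod_nonneg fun p hp =>
        (hfac01 p (Finset.mem_filter.mp (hFA hp)).2).1
    exact mul_le_of_le_one_left hge0 hle1
  have step2 : ∏ p ∈ F, (1 - 1 / (p : ℝ))
      ≤ ∏ p ∈ x.primeFactors, (1 - 1 / (p : ℝ)) := by
    rw [hF, Finset.prod_image fun a _ b _ h =>
      Nat.nth_injective Nat.infinite_setOf_prime h]
    exact aux_pairing (fun p => 1 - 1 / (p : ℝ))
      (fun p q hp hq h => by
        have hp0 : (0 : ℝ) < p := by exact_mod_cast hp.pos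
        have : 1 / (q : ℝ) ≤ 1 / (p : ℝ) :=
          one_div_le_one_div_of_le hp0 (by exact_mod_cast h)
        linarith)
      (fun p hp => (hfac01 p hp).1) m x.primeFactors rfl hxprimes
  linarith [step1, step2]
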